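/- Let G : ℝ → ℝ → ℝ be a C² function that is strictly concave (its Hessian is negative definite everywhere) and satisfies G_e > 0. Then the function q(ρ, m, E) := -ρ·G(E/ρ - m²/(2ρ²), 1/ρ), defined on the region {(ρ,m,E) : ρ > 0}, is convex. -/

import Mathlib

open Real

lemma pos_comb {a b x y : ℝ} (ha : 0 ≤ a) (hb : 0 ≤ b) (hab : a + b = 1)
    (hx : 0 < x) (hy : 0 < y) : 0 < a * x + b * y := by
  rcases eq_or_lt_of_le ha with h | h
  · have hb1 : b = 1 := by linarith
    simp [← h, hb1, hy]
  · have h1 : 0 < a * x := mul_pos h hx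
    have h2 : 0 ≤ b * y := mul_nonneg hb hy.le
    linarith


section
variable (G : ℝ → ℝ → ℝ)

lemma incl_fst (v x : ℝ) : HasDerivAt (fun t : ℝ => ((t, v) : ℝ × ℝ)) (1, 0) x :=
  (hasDerivAt_id x).prodMk (hasDerivAt_const x v)

lemma incl_snd (e x : ℝ) : HasDerivAt (fun t : ℝ => ((e, t) : ℝ × ℝ)) (0, 1) x :=
  (hasDerivAt_const x e).prodMk (hasDerivAt_id x)

variable (hG : ContDiff ℝ 2 (Function.uncurry G))
include hG

lemma L1 : ∀ p : ℝ × ℝ, HasFDerivAt (Function.uncurry G)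
    (fderiv ℝ (Function.uncurry G) p) p :=
  fun p => (hG.differentiable two_ne_zero p).hasFDerivAt

lemma L2 : ∀ p : ℝ × ℝ, HasFDerivAt (fderiv ℝ (Function.uncurry G))
    (fderiv ℝ (fderiv ℝ (Function.uncurry G)) p) p :=
  fun p => ((hG.fderiv_right (m := 1) (by norm_num)).differentiable one_ne_zero p).hasFDerivAt

lemma d_e (e v : ℝ) :
    HasDerivAt (fun x => G x v) (fderiv ℝ (Function.uncurry G) (e, v) (1, 0)) e :=
  by have := (L1 G hG (e, v)).comp_hasDerivAt e (incl_fst v e); exact this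

lemma d_v (e v : ℝ) :
    HasDerivAt (fun y => G e y) (fderiv ℝ (Function.uncurry G) (e, v) (0, 1)) v :=
  by have := (L1 G hG (e, v)).comp_hasDerivAt v (incl_snd e v); exact this

lemma d2_e (e v : ℝ) (w : ℝ × ℝ) :
    HasDerivAt (fun x => fderiv ℝ (Function.uncurry G) (x, v) w)
      (fderiv ℝ (fderiv ℝ (Function.uncurry G)) (e, v) (1, 0) w) e := by
  have h : HasDerivAt (fun x => fderiv ℝ (Function.uncurry G) (x, v))
      (fderiv ℝ (fderiv ℝ (Function.uncurry G)) (e, v) (1, 0)) e :=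
    (L2 G hG (e, v)).comp_hasDerivAt e (incl_fst v e)
  simpa using h.clm_apply (hasDerivAt_const e w)

lemma d2_v (e v : ℝ) (w : ℝ × ℝ) :
    HasDerivAt (fun x => fderiv ℝ (Function.uncurry G) (e, x) w)
      (fderiv ℝ (fderiv ℝ (Function.uncurry G)) (e, v) (0, 1) w) v := by
  have h : HasDerivAt (fun x => fderiv ℝ (Function.uncurry G) (e, x))
      (fderiv ℝ (fderiv ℝ (Function.uncurry G)) (e, v) (0, 1)) v :=
    (L2 G hG (e, v)).comp_hasDerivAt v (incl_snd e v)
  simpa using h.clm_apply (hasDerivAt_const v w)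

lemma partial_ee (e v : ℝ) :
    deriv (fun x => deriv (fun y => G y v) x) e
      = fderiv ℝ (fderiv ℝ (Function.uncurry G)) (e, v) (1, 0) (1, 0) := by
  have h : (fun x => deriv (fun y => G y v) x)
      = fun x => fderiv ℝ (Function.uncurry G) (x, v) (1, 0) :=
    funext fun x => (d_e G hG x v).deriv
  rw [h]
  exact (d2_e G hG e v (1, 0)).deriv

lemma partial_ev (e v : ℝ) :
    deriv (fun x => deriv (fun y => G y x) e) v
      = fderiv ℝ (fderiv ℝ (Function.uncurry G)) (e, v) (0, 1) (1, 0) := by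
  have h : (fun x => deriv (fun y => G y x) e)
      = fun x => fderiv ℝ (Function.uncurry G) (e, x) (1, 0) :=
    funext fun x => (d_e G hG e x).deriv
  rw [h]
  exact (d2_v G hG e v (1, 0)).deriv

lemma partial_vv (e v : ℝ) :
    deriv (fun x => deriv (fun y => G e y) x) v
      = fderiv ℝ (fderiv ℝ (Function.uncurry G)) (e, v) (0, 1) (0, 1) := by
  have h : (fun x => deriv (fun y => G e y) x)
      = fun x => fderiv ℝ (Function.uncurry G) (e, x) (0, 1) :=
    funext fun x => (d_v G hG e x).deriv
  rw [h]
  exact (d2_v G hG e v (0, 1)).deriv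


lemma qform
    (hnegdef : ∀ e v a b : ℝ, (a, b) ≠ (0, 0) →
      a ^ 2 * (deriv (fun x => deriv (fun y => G y v) x) e)
        + 2 * a * b * (deriv (fun x => deriv (fun y => G y x) e) v)
        + b ^ 2 * (deriv (fun x => deriv (fun y => G e y) x) v) < 0) :
    ∀ (p d : ℝ × ℝ), fderiv ℝ (fderiv ℝ (Function.uncurry G)) p d d ≤ 0 := by
  rintro ⟨e, v⟩ ⟨a, b⟩
  by_cases hd : ((a, b) : ℝ × ℝ) = (0, 0)
  · rw [hd]
    have : ((0, 0) : ℝ × ℝ) = (0 : ℝ × ℝ) := rfl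
    simp [this]
  · have key := hnegdef e v a b hd
    rw [partial_ee G hG, partial_ev G hG, partial_vv G hG] at key
    have sym := second_derivative_symmetric (L1 G hG) (L2 G hG (e, v))
      ((1 : ℝ), (0 : ℝ)) ((0 : ℝ), (1 : ℝ))
    have hdecomp : ((a, b) : ℝ × ℝ) = a • ((1 : ℝ), (0 : ℝ)) + b • ((0 : ℝ), (1 : ℝ)) := by
      simp [Prod.ext_iff]
    have hexp : fderiv ℝ (fderiv ℝ (Function.uncurry G)) (e, v) (a, b) (a, b)
        = a ^ 2 * (fderiv ℝ (fderiv ℝ (Function.uncurry G)) (e, v) (1, 0) (1, 0))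
          + 2 * a * b * (fderiv ℝ (fderiv ℝ (Function.uncurry G)) (e, v) (0, 1) (1, 0))
          + b ^ 2 * (fderiv ℝ (fderiv ℝ (Function.uncurry G)) (e, v) (0, 1) (0, 1)) := by
      rw [hdecomp]
      simp only [map_add, map_smul, ContinuousLinearMap.add_apply,
        ContinuousLinearMap.smul_apply, smul_eq_mul]
      rw [sym]; ring
    rw [hexp]
    exact key.le

lemma concaveG
    (hq : ∀ (p d : ℝ × ℝ), fderiv ℝ (fderiv ℝ (Function.uncurry G)) p d d ≤ 0) :
    ConcaveOn ℝ Set.univ (Function.uncurry G) := by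
  refine ⟨convex_univ, ?_⟩
  intro x _ y _ a b ha hb hab
  set d : ℝ × ℝ := y - x with hdset
  have hld : ∀ t : ℝ, HasDerivAt (fun t : ℝ => x + t • d) d t := by
    intro t
    simpa using ((hasDerivAt_id t).smul_const d).const_add x
  set g : ℝ → ℝ := fun t => Function.uncurry G (x + t • d) with hg
  have hg1 : ∀ t : ℝ, HasDerivAt g (fderiv ℝ (Function.uncurry G) (x + t • d) d) t :=
    fun t => by have := (L1 G hG (x + t • d)).comp_hasDerivAt t (hld t); exact this
  have hderivg : deriv g = fun t => fderiv ℝ (Function.uncurry G) (x + t • d) d :=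
    funext fun t => (hg1 t).deriv
  have hg2 : ∀ t : ℝ, HasDerivAt (deriv g)
      (fderiv ℝ (fderiv ℝ (Function.uncurry G)) (x + t • d) d d) t := by
    intro t
    rw [hderivg]
    have h : HasDerivAt (fun t : ℝ => fderiv ℝ (Function.uncurry G) (x + t • d))
        (fderiv ℝ (fderiv ℝ (Function.uncurry G)) (x + t • d) d) t :=
      (L2 G hG (x + t • d)).comp_hasDerivAt t (hld t)
    simpa using h.clm_apply (hasDerivAt_const t d)
  have hcc : ConcaveOn ℝ Set.univ g := by
    apply concaveOn_univ_of_deriv2_nonpos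
    · exact fun t => (hg1 t).differentiableAt
    · exact fun t => (hg2 t).differentiableAt
    · intro t
      have : deriv^[2] g t = deriv (deriv g) t := by
        simp [Function.iterate_succ, Function.iterate_one]
      rw [this, (hg2 t).deriv]
      exact hq _ _
  have key := hcc.2 (Set.mem_univ (0 : ℝ)) (Set.mem_univ (1 : ℝ)) ha hb hab
  have h0 : g 0 = Function.uncurry G x := by simp [hg]
  have h1 : g 1 = Function.uncurry G y := by
    have hxd : x + (1 : ℝ) • d = y := by rw [hdset]; module
    rw [hg]; simp only [hxd]
  have hb1 : a • (0 : ℝ) + b • 1 = b := by simp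
  have hxy : x + b • d = a • x + b • y := by
    rw [hdset]
    have hab' : a = 1 - b := by linarith
    rw [hab']; module
  have hab2 : g (a • (0 : ℝ) + b • 1) = Function.uncurry G (a • x + b • y) := by
    rw [hb1, hg]; simp only [hxy]
  rw [h0, h1, hab2] at key
  simpa using key

end

lemma monoG (G : ℝ → ℝ → ℝ) (hGe : ∀ e v : ℝ, 0 < deriv (fun x => G x v) e) :
    ∀ v : ℝ, StrictMono (fun x => G x v) :=
  fun v => strictMono_of_deriv_pos (fun x => hGe x v)

/-- convexity of `q(ρ,m,E) = -ρ G(E/ρ - m²/(2ρ²), 1/ρ)` on `{ρ > 0}`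
for a C², strictly concave entropy `G` (negative definite Hessian) with `G_e > 0`. -/
theorem q_convex
    (G : ℝ → ℝ → ℝ)
    (hG : ContDiff ℝ 2 (Function.uncurry G))
    (hGe : ∀ e v : ℝ, 0 < deriv (fun x => G x v) e)
    (hnegdef : ∀ e v a b : ℝ, (a, b) ≠ (0, 0) →
      a ^ 2 * (deriv (fun x => deriv (fun y => G y v) x) e)
        + 2 * a * b * (deriv (fun x => deriv (fun y => G y x) e) v)
        + b ^ 2 * (deriv (fun x => deriv (fun y => G e y) x) v) < 0) :
    ConvexOn ℝ {p : ℝ × ℝ × ℝ | 0 < p.1}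
      (fun p => -p.1 * G (p.2.2 / p.1 - p.2.1 ^ 2 / (2 * p.1 ^ 2)) (1 / p.1)) := by
  have hmono : ∀ v : ℝ, StrictMono (fun x => G x v) := monoG G hGe
  have hconc : ConcaveOn ℝ Set.univ (Function.uncurry G) :=
    concaveG G hG (qform G hG hnegdef)
  constructor
  · rintro ⟨ρ₁, m₁, E₁⟩ hp ⟨ρ₂, m₂, E₂⟩ hq a b ha hb hab
    simp only [Set.mem_setOf_eq] at hp hq ⊢
    simp only [Prod.smul_mk, Prod.mk_add_mk, smul_eq_mul]
    exact pos_comb ha hb hab hp hq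
  · rintro ⟨ρ₁, m₁, E₁⟩ hp ⟨ρ₂, m₂, E₂⟩ hq a b ha hb hab
    simp only [Set.mem_setOf_eq] at hp hq
    simp only [Prod.smul_mk, Prod.mk_add_mk, smul_eq_mul]
    have hρ1 : ρ₁ ≠ 0 := hp.ne'
    have hρ2 : ρ₂ ≠ 0 := hq.ne'
    obtain ⟨ρ, hρdef⟩ : ∃ ρ : ℝ, ρ = a * ρ₁ + b * ρ₂ := ⟨_, rfl⟩
    rw [show a * ρ₁ + b * ρ₂ = ρ from hρdef.symm]
    have hρpos : 0 < ρ := hρdef ▸ pos_comb ha hb hab hp hq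
    have hρ : ρ ≠ 0 := hρpos.ne'
    obtain ⟨l, hldef⟩ : ∃ l : ℝ, l = a * ρ₁ / ρ := ⟨_, rfl⟩
    obtain ⟨μ, hμdef⟩ : ∃ μ : ℝ, μ = b * ρ₂ / ρ := ⟨_, rfl⟩
    have hl0 : 0 ≤ l := by rw [hldef]; positivity
    have hμ0 : 0 ≤ μ := by rw [hμdef]; positivity
    have hlμ : l + μ = 1 := by
      rw [hldef, hμdef, ← add_div, ← hρdef, div_self hρ]
    set u₁ : ℝ := m₁ / ρ₁ with hu1
    set u₂ : ℝ := m₂ / ρ₂ with hu2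
    set e₁ : ℝ := E₁ / ρ₁ - m₁ ^ 2 / (2 * ρ₁ ^ 2) with he1
    set e₂ : ℝ := E₂ / ρ₂ - m₂ ^ 2 / (2 * ρ₂ ^ 2) with he2
    have he1' : e₁ = E₁ / ρ₁ - u₁ ^ 2 / 2 := by rw [he1, hu1]; field_simp
    have he2' : e₂ = E₂ / ρ₂ - u₂ ^ 2 / 2 := by rw [he2, hu2]; field_simp
    have hA : l * (E₁ / ρ₁) + μ * (E₂ / ρ₂) = (a * E₁ + b * E₂) / ρ := by
      rw [hldef, hμdef]; field_simp
    have hB : l * u₁ + μ * u₂ = (a * m₁ + b * m₂) / ρ := by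
      rw [hldef, hμdef, hu1, hu2]; field_simp
    have hC : (l * u₁ + μ * u₂) ^ 2 ≤ l * u₁ ^ 2 + μ * u₂ ^ 2 := by
      nlinarith [sq_nonneg (u₁ - u₂), mul_nonneg hl0 hμ0]
    have hEbar : (a * m₁ + b * m₂) ^ 2 / (2 * ρ ^ 2)
        = ((a * m₁ + b * m₂) / ρ) ^ 2 / 2 := by rw [div_pow, div_div]; ring_nf
    have hstep1 : l * e₁ + μ * e₂
        ≤ (a * E₁ + b * E₂) / ρ - (a * m₁ + b * m₂) ^ 2 / (2 * ρ ^ 2) := by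
      rw [he1', he2', hEbar, ← hA, ← hB]
      linarith [hC]
    have hv : l * (1 / ρ₁) + μ * (1 / ρ₂) = 1 / ρ := by
      rw [hldef, hμdef, div_mul_div_comm, div_mul_div_comm, mul_one, mul_one,
        mul_div_mul_right _ _ hρ1, mul_div_mul_right _ _ hρ2, ← add_div, hab]
    have hmonostep : G (l * e₁ + μ * e₂) (1 / ρ)
        ≤ G ((a * E₁ + b * E₂) / ρ - (a * m₁ + b * m₂) ^ 2 / (2 * ρ ^ 2)) (1 / ρ) :=
      (hmono (1 / ρ)).monotone hstep1
    have hconcstep := (hconc).2 (Set.mem_univ ((e₁, 1 / ρ₁) : ℝ × ℝ))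
      (Set.mem_univ ((e₂, 1 / ρ₂) : ℝ × ℝ)) hl0 hμ0 hlμ
    have hpt : l • ((e₁, 1 / ρ₁) : ℝ × ℝ) + μ • ((e₂, 1 / ρ₂) : ℝ × ℝ)
        = (l * e₁ + μ * e₂, 1 / ρ) := by
      have hv' : l * ρ₁⁻¹ + μ * ρ₂⁻¹ = ρ⁻¹ := by simpa [one_div] using hv
      simp [Prod.ext_iff, smul_eq_mul, hv']
    rw [hpt] at hconcstep
    simp only [Function.uncurry_apply_pair, smul_eq_mul] at hconcstep
    -- combine
    have hchain : l * G e₁ (1 / ρ₁) + μ * G e₂ (1 / ρ₂)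
        ≤ G ((a * E₁ + b * E₂) / ρ - (a * m₁ + b * m₂) ^ 2 / (2 * ρ ^ 2)) (1 / ρ) :=
      le_trans hconcstep hmonostep
    have hmul := mul_le_mul_of_nonneg_left hchain hρpos.le
    have hid1 : ρ * l = a * ρ₁ := by rw [hldef, mul_comm, div_mul_cancel₀ _ hρ]
    have hid2 : ρ * μ = b * ρ₂ := by rw [hμdef, mul_comm, div_mul_cancel₀ _ hρ]
    have hfin : a * ρ₁ * G e₁ (1 / ρ₁) + b * ρ₂ * G e₂ (1 / ρ₂)
        ≤ ρ * G ((a * E₁ + b * E₂) / ρ - (a * m₁ + b * m₂) ^ 2 / (2 * ρ ^ 2)) (1 / ρ) := by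
      calc a * ρ₁ * G e₁ (1 / ρ₁) + b * ρ₂ * G e₂ (1 / ρ₂)
          = ρ * (l * G e₁ (1 / ρ₁) + μ * G e₂ (1 / ρ₂)) := by
            rw [mul_add, ← mul_assoc, ← mul_assoc, hid1, hid2]
        _ ≤ _ := hmul
    linarith [hfin]
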